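/- Assume the standing assumptions. Then a belongs to the continuous spectrum of U if and only if 1 belongs to the continuous spectrum of T, and −a belongs to the continuous spectrum of U if and only if −1 belongs to the continuous spectrum of T. -/

import Mathlib

open ContinuousLinearMap

/-- `λ` belongs to the continuous spectrum of `A`: `A − λ` is injective, has dense
range, but is not surjective. -/
def ContSpec {E : Type*} [NormedAddCommGroup E] [NormedSpace ℂ E]
    (A : E →L[ℂ] E) (lam : ℂ) : Prop :=
  Function.Injective ⇑(A - lam • (1 : E →L[ℂ] E)) ∧
  DenseRange ⇑(A - lam • (1 : E →L[ℂ] E)) ∧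
  ¬ Function.Surjective ⇑(A - lam • (1 : E →L[ℂ] E))

noncomputable section


local notation "⟪" x ", " y "⟫" => @inner ℂ _ _ x y

lemma real_sq_eq {r s : ℝ} (h : r^2 = s^2) (hr : 0 ≤ r) (hs : 0 ≤ s) : r = s := by
  rw [← Real.sqrt_sq hr, ← Real.sqrt_sq hs, h]

lemma pyth_sq {E : Type*} [NormedAddCommGroup E] [InnerProductSpace ℂ E] {x y : E}
    (h : ⟪x, y⟫ = 0) : ‖x + y‖^2 = ‖x‖^2 + ‖y‖^2 := by
  have := norm_add_sq_eq_norm_sq_add_norm_sq_of_inner_eq_zero x y h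
  simpa [pow_two] using this


lemma sqrt_step {s t : ℝ} (hs : 0 ≤ s) (ht : 0 ≤ t) (h : s^2 ≤ t^2) : s ≤ t := by
  rw [← Real.sqrt_sq hs, ← Real.sqrt_sq ht]
  exact Real.sqrt_le_sqrt h

lemma key2 {al be dl X Q P Cn : ℝ} (hal : 0 ≤ al) (hdl0 : 0 < dl) (hdl1 : dl ≤ 1)
    (hX : 0 < X) (hCn : 0 ≤ Cn)
    (h1 : X^2 = P^2 + Q^2) (h2 : Cn^2 = al^2*P^2 + be^2*Q^2)
    (h3 : Cn ≤ al*X + dl*X) (h4 : al*X - dl*X ≤ Cn) :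
    (al^2 - be^2) * Q^2 ≤ (2*al+3)*dl*X^2 ∧ (be^2 - al^2) * Q^2 ≤ (2*al+3)*dl*X^2 := by
  have halX : 0 ≤ al*X := mul_nonneg hal hX.le
  have hdlX : 0 < dl*X := mul_pos hdl0 hX
  have h5 : al*X ≤ dl*X + Cn := by linarith
  have h5b : 0 ≤ dl*X + Cn + al*X := by linarith
  have h6 : al^2*X^2 ≤ (dl*X + Cn)^2 := by nlinarith [h5, h5b]
  have h7 : (dl*X)*Cn ≤ (dl*X)*(al*X + dl*X) := mul_le_mul_of_nonneg_left h3 hdlX.le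
  have h8 : dl^2*X^2 ≤ dl*X^2 :=
    mul_le_mul_of_nonneg_right (by nlinarith [hdl0, hdl1] : dl^2 ≤ dl) (sq_nonneg X)
  have h9 : Cn^2 ≤ (al*X + dl*X)^2 := by nlinarith [h3, hCn, h5b]
  have h10 : al^2*X^2 = al^2*P^2 + al^2*Q^2 := by linear_combination al^2 * h1
  have hdlX2 : 0 ≤ dl*X^2 := by positivity
  constructor
  · linarith only [h6, h7, h8, h10, h2]
  · linarith only [h9, h8, h10, h2, hdlX2]

lemma aux_dense {E F : Type*}
    [NormedAddCommGroup E] [InnerProductSpace ℂ E] [CompleteSpace E]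
    [NormedAddCommGroup F] [InnerProductSpace ℂ F] [CompleteSpace F]
    (A : E →L[ℂ] F) :
    DenseRange ⇑A ↔ ∀ y : F, (∀ x, ⟪A x, y⟫ = 0) → y = 0 := by
  have hmem : ∀ y : F, y ∈ (LinearMap.range (A : E →ₗ[ℂ] F))ᗮ ↔ ∀ x, ⟪A x, y⟫ = 0 := by
    intro y
    rw [Submodule.mem_orthogonal]
    constructor
    · intro h x; exact h (A x) (LinearMap.mem_range_self _ x)
    · rintro h u ⟨x, rfl⟩; exact h x
  constructor
  · intro hdr y hy
    have h1 : (LinearMap.range (A : E →ₗ[ℂ] F)).topologicalClosure = ⊤ := by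
      rw [← Submodule.dense_iff_topologicalClosure_eq_top]
      rw [LinearMap.coe_range]; exact hdr
    have h2 := Submodule.topologicalClosure_eq_top_iff.mp h1
    have h3 : y ∈ (LinearMap.range (A : E →ₗ[ℂ] F))ᗮ := (hmem y).mpr hy
    rw [h2] at h3; simpa using h3
  · intro h
    have h2 : (LinearMap.range (A : E →ₗ[ℂ] F))ᗮ = ⊥ := by
      rw [Submodule.eq_bot_iff]; intro y hy; exact h y ((hmem y).mp hy)
    have h1 := Submodule.topologicalClosure_eq_top_iff.mpr h2
    have := Submodule.dense_iff_topologicalClosure_eq_top.mpr h1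
    rwa [LinearMap.coe_range] at this

lemma aux_surj_iff {E : Type*} [NormedAddCommGroup E] [InnerProductSpace ℂ E] [CompleteSpace E]
    (A : E →L[ℂ] E) (hi : Function.Injective ⇑A) (hdr : DenseRange ⇑A) :
    Function.Surjective ⇑A ↔ ∃ c : ℝ, 0 < c ∧ ∀ x, c * ‖x‖ ≤ ‖A x‖ := by
  constructor
  · intro hs
    set e := ContinuousLinearEquiv.ofBijective A (LinearMap.ker_eq_bot.mpr hi)
      (LinearMap.range_eq_top.mpr hs) with he
    set M : ℝ := ‖(e.symm : E →L[ℂ] E)‖ + 1 with hM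
    have hM0 : 0 < M := by positivity
    refine ⟨M⁻¹, by positivity, fun x => ?_⟩
    have h0 : e.symm (A x) = x := ContinuousLinearEquiv.ofBijective_symm_apply_apply A _ _ x
    have h1 : ‖x‖ ≤ M * ‖A x‖ := by
      calc ‖x‖ = ‖e.symm (A x)‖ := by rw [h0]
        _ ≤ ‖(e.symm : E →L[ℂ] E)‖ * ‖A x‖ := by
            exact (e.symm : E →L[ℂ] E).le_opNorm (A x)
        _ ≤ M * ‖A x‖ := by
            have := norm_nonneg (A x)
            nlinarith
    calc M⁻¹ * ‖x‖ ≤ M⁻¹ * (M * ‖A x‖) :=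
          mul_le_mul_of_nonneg_left h1 (by positivity)
      _ = ‖A x‖ := by field_simp
  · rintro ⟨c, hc, hb⟩
    have hanti : AntilipschitzWith (⟨c⁻¹, by positivity⟩ : NNReal) ⇑A := by
      apply ContinuousLinearMap.antilipschitz_of_bound
      intro x
      have h := hb x
      show ‖x‖ ≤ c⁻¹ * ‖A x‖
      rw [inv_mul_eq_div, le_div_iff₀ hc]
      linarith [hb x]
    have hclosed : IsClosed (Set.range ⇑A) := hanti.isClosed_range A.uniformContinuous
    have huniv : Set.range ⇑A = Set.univ := by
      have hd := dense_iff_closure_eq.mp hdr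
      rw [hclosed.closure_eq] at hd
      exact hd
    intro y
    have : y ∈ Set.range ⇑A := by rw [huniv]; trivial
    exact this

set_option maxHeartbeats 2000000 in
theorem key_thm {H K : Type*}
    [NormedAddCommGroup H] [InnerProductSpace ℂ H] [CompleteSpace H]
    [NormedAddCommGroup K] [InnerProductSpace ℂ K] [CompleteSpace K]
    (a b μ : ℝ) (hμ : μ^2 = 1) (ha : a ≠ 0) (hab : a^2 ≠ b^2)
    (d : H →L[ℂ] K) (hd : d ∘L (adjoint d) = 1)
    (S : H →L[ℂ] H) (hS : IsSelfAdjoint S) (hS2 : S ∘L S = 1) :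
    ContSpec (S ∘L ((a : ℂ) • ((adjoint d) ∘L d) + (b : ℂ) • (1 - (adjoint d) ∘L d)))
      ((μ:ℂ) * a) ↔ ContSpec (d ∘L S ∘L (adjoint d)) (μ:ℂ) := by
  -- scaffold: basic facts
  have hdD : ∀ v : K, d (adjoint d v) = v := by
    intro v
    have := ContinuousLinearMap.ext_iff.mp hd v
    simpa using this
  have hSS : ∀ x : H, S (S x) = x := by
    intro x
    have := ContinuousLinearMap.ext_iff.mp hS2 x
    simpa using this
  have hSadj : adjoint S = S := isSelfAdjoint_iff'.mp hS
  have hSinner : ∀ u v : H, ⟪S u, v⟫ = ⟪u, S v⟫ := by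
    intro u v
    nth_rewrite 1 [← hSadj]
    exact adjoint_inner_left S v u
  have hSnorm : ∀ x : H, ‖S x‖ = ‖x‖ := by
    intro x
    have h : ⟪S x, S x⟫ = ⟪x, x⟫ := by rw [hSinner, hSS]
    apply real_sq_eq _ (norm_nonneg _) (norm_nonneg _)
    rw [← @inner_self_eq_norm_sq ℂ, ← @inner_self_eq_norm_sq ℂ, h]
  have hDnorm : ∀ v : K, ‖adjoint d v‖ = ‖v‖ := by
    intro v
    have h : ⟪adjoint d v, adjoint d v⟫ = ⟪v, v⟫ := by
      rw [adjoint_inner_left, hdD v]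
    apply real_sq_eq _ (norm_nonneg _) (norm_nonneg _)
    rw [← @inner_self_eq_norm_sq ℂ, ← @inner_self_eq_norm_sq ℂ, h]
  have hP : ∀ x : H, adjoint d (d (adjoint d (d x))) = adjoint d (d x) := by
    intro x; rw [hdD (d x)]
  have horth : ∀ x y : H, ⟪adjoint d (d x), y - adjoint d (d y)⟫ = 0 := by
    intro x y
    rw [adjoint_inner_left]
    rw [map_sub, hdD (d y), sub_self, inner_zero_right]
  have hpyth : ∀ x : H, ‖x‖^2 = ‖adjoint d (d x)‖^2 + ‖x - adjoint d (d x)‖^2 := by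
    intro x
    have h := pyth_sq (horth x x)
    have e : adjoint d (d x) + (x - adjoint d (d x)) = x := by abel
    rw [e] at h
    exact h
  have hdx_norm : ∀ x : H, ‖d x‖ = ‖adjoint d (d x)‖ := by
    intro x
    have h : ⟪adjoint d (d x), adjoint d (d x)⟫ = ⟪d x, d x⟫ := by
      rw [adjoint_inner_left, hdD (d x)]
    apply real_sq_eq _ (norm_nonneg _) (norm_nonneg _)
    rw [← @inner_self_eq_norm_sq ℂ, ← @inner_self_eq_norm_sq ℂ, h]
  have hd_contract : ∀ x : H, ‖d x‖ ≤ ‖x‖ := by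
    intro x
    rw [hdx_norm x]
    nlinarith [hpyth x, norm_nonneg (x - adjoint d (d x)), norm_nonneg (adjoint d (d x)),
      norm_nonneg x]
  have haa : 0 < |a| := abs_pos.mpr ha
  have hμ1 : ‖((μ:ℝ):ℂ)‖ = 1 := by
    rw [Complex.norm_real, Real.norm_eq_abs]
    have h2 : (μ - 1) * (μ + 1) = 0 := by ring_nf; linarith
    rcases mul_eq_zero.mp h2 with h' | h'
    · have : μ = 1 := by linarith
      simp [this]
    · have : μ = -1 := by linarith
      simp [this]
  have hμnormH : ∀ x : H, ‖(μ:ℂ) • x‖ = ‖x‖ := by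
    intro x; rw [norm_smul, hμ1, one_mul]
  have hμnormK : ∀ x : K, ‖(μ:ℂ) • x‖ = ‖x‖ := by
    intro x; rw [norm_smul, hμ1, one_mul]
  have hμsq : ((μ:ℝ):ℂ) * ((μ:ℝ):ℂ) = 1 := by
    have : ((μ:ℝ):ℂ)^2 = 1 := by exact_mod_cast congrArg (fun r : ℝ => (r : ℂ)) hμ
    rw [← this]; ring
  -- set up operators
  unfold ContSpec
  set A := (S ∘L ((a : ℂ) • ((adjoint d) ∘L d) + (b : ℂ) • (1 - (adjoint d) ∘L d)))
      - ((μ:ℂ) * (a:ℂ)) • (1 : H →L[ℂ] H) with hA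
  set B := (d ∘L S ∘L (adjoint d)) - (μ:ℂ) • (1 : K →L[ℂ] K) with hB
  have hAx : ∀ x : H, A x
      = S ((a:ℂ) • (adjoint d (d x)) + (b:ℂ) • (x - adjoint d (d x))) - ((μ:ℂ) * a) • x := by
    intro x
    rw [hA]
    simp only [ContinuousLinearMap.sub_apply, ContinuousLinearMap.smul_apply,
      ContinuousLinearMap.one_apply, ContinuousLinearMap.comp_apply,
      ContinuousLinearMap.add_apply]
  have hBu : ∀ u : K, B u = d (S (adjoint d u)) - (μ:ℂ) • u := by
    intro u
    rw [hB]
    simp only [ContinuousLinearMap.sub_apply, ContinuousLinearMap.smul_apply,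
      ContinuousLinearMap.one_apply, ContinuousLinearMap.comp_apply]
  have hADu : ∀ u : K, A (adjoint d u) = (a:ℂ) • (S (adjoint d u) - (μ:ℂ) • (adjoint d u)) := by
    intro u
    rw [hAx, hdD u, sub_self, smul_zero, add_zero, map_smul, smul_sub, smul_smul]
    congr 1
    rw [mul_comm]
  have hBdp : ∀ y : H, adjoint d (d y) = y → B (d y) = d (S y - (μ:ℂ) • y) := by
    intro y hy
    rw [hBu (d y), hy, map_sub, map_smul]
  have hDB : ∀ u : K, adjoint d (B u)
      = adjoint d (d (S (adjoint d u))) - (μ:ℂ) • (adjoint d u) := by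
    intro u; rw [hBu u, map_sub, map_smul]
  have hCnorm : ∀ x : H, ‖(a:ℂ) • (adjoint d (d x)) + (b:ℂ) • (x - adjoint d (d x))‖^2
      = a^2 * ‖adjoint d (d x)‖^2 + b^2 * ‖x - adjoint d (d x)‖^2 := by
    intro x
    have h0 : ⟪(a:ℂ) • (adjoint d (d x)), (b:ℂ) • (x - adjoint d (d x))⟫ = 0 := by
      rw [inner_smul_left, inner_smul_right, horth x x, mul_zero, mul_zero]
    rw [pyth_sq h0, norm_smul, norm_smul, Complex.norm_real, Complex.norm_real,
      Real.norm_eq_abs, Real.norm_eq_abs, mul_pow, mul_pow, sq_abs, sq_abs]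
  -- injectivity equivalence
  have hinjBofA : Function.Injective ⇑A → Function.Injective ⇑B := by
    intro h
    rw [injective_iff_map_eq_zero] at h ⊢
    intro u hu
    rw [hBu u] at hu
    have hw : d (S (adjoint d u)) = (μ:ℂ) • u := sub_eq_zero.mp hu
    have hz : adjoint d (d (S (adjoint d u))) = (μ:ℂ) • (adjoint d u) := by
      rw [hw, map_smul]
    have hn1 : ‖adjoint d (d (S (adjoint d u)))‖ = ‖S (adjoint d u)‖ := by
      rw [hz, hμnormH, hSnorm, hDnorm]
    have hp := hpyth (S (adjoint d u))
    rw [hn1] at hp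
    have h4 : ‖S (adjoint d u) - adjoint d (d (S (adjoint d u)))‖^2 = 0 := by linarith
    have h6 : ‖S (adjoint d u) - adjoint d (d (S (adjoint d u)))‖ = 0 :=
      pow_eq_zero_iff two_ne_zero |>.mp h4
    have h5 : S (adjoint d u) = adjoint d (d (S (adjoint d u))) :=
      sub_eq_zero.mp (norm_eq_zero.mp h6)
    have h7 : A (adjoint d u) = 0 := by
      rw [hADu u, h5, hz, sub_self, smul_zero]
    have h8 := h _ h7
    have h9 : u = d (adjoint d u) := (hdD u).symm
    rw [h9, h8, map_zero]
  have hinjAofB : Function.Injective ⇑B → Function.Injective ⇑A := by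
    intro h
    rw [injective_iff_map_eq_zero] at h ⊢
    intro x hx
    rw [hAx x] at hx
    have hx' : S ((a:ℂ) • (adjoint d (d x)) + (b:ℂ) • (x - adjoint d (d x)))
        = ((μ:ℂ)*a) • x := sub_eq_zero.mp hx
    have hc : (a:ℂ) • (adjoint d (d x)) + (b:ℂ) • (x - adjoint d (d x))
        = ((μ:ℂ)*a) • S x := by
      have h1 := congrArg S hx'
      rw [hSS, map_smul] at h1
      exact h1
    have hn2 : ‖((μ:ℂ)*a) • S x‖^2 = a^2 * ‖x‖^2 := by
      rw [norm_smul, norm_mul, hμ1, Complex.norm_real, Real.norm_eq_abs, one_mul, hSnorm,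
        mul_pow, sq_abs]
    have e1 : a^2 * ‖adjoint d (d x)‖^2 + b^2 * ‖x - adjoint d (d x)‖^2 = a^2 * ‖x‖^2 := by
      rw [← hCnorm x, hc, hn2]
    have e2 := hpyth x
    have e3 : (a^2 - b^2) * ‖x - adjoint d (d x)‖^2 = 0 := by linear_combination -e1 - a^2 * e2
    have hq : ‖x - adjoint d (d x)‖^2 = 0 := by
      rcases mul_eq_zero.mp e3 with h' | h'
      · exact absurd (by linarith : a^2 = b^2) hab
      · exact h'
    have hxp : x = adjoint d (d x) := by
      have h6 : ‖x - adjoint d (d x)‖ = 0 := pow_eq_zero_iff two_ne_zero |>.mp hq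
      exact sub_eq_zero.mp (norm_eq_zero.mp h6)
    have hc2 : (a:ℂ) • x = ((μ:ℂ)*a) • S x := by
      rw [← hxp, sub_self, smul_zero, add_zero] at hc
      exact hc
    have hca : (a:ℂ) ≠ 0 := Complex.ofReal_ne_zero.mpr ha
    have hSx : S x = (μ:ℂ) • x := by
      have h1 := congrArg (fun z => (μ:ℂ) • z) hc2
      simp only [smul_smul] at h1
      rw [show ((μ:ℝ):ℂ) * (((μ:ℝ):ℂ) * a) = (a:ℂ) by rw [← mul_assoc, hμsq, one_mul]] at h1
      apply smul_right_injective H hca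
      show (a:ℂ) • S x = (a:ℂ) • ((μ:ℂ) • x)
      rw [← h1, smul_smul, mul_comm]
    have hBdx : B (d x) = 0 := by
      rw [hBdp x hxp.symm, hSx, sub_self, map_zero]
    have h8 := h _ hBdx
    rw [hxp, h8, map_zero]
  -- dense range equivalences
  have hSAS : ∀ y : H, S (A (S y)) = (a:ℂ) • (adjoint d (d (S y)))
      + (b:ℂ) • (S y - adjoint d (d (S y))) - ((μ:ℂ)*a) • y := by
    intro y
    rw [hAx (S y), map_sub, map_smul, hSS, hSS]
  have hAinner : ∀ x y : H, ⟪A x, y⟫ = ⟪x, S (A (S y))⟫ := by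
    intro x y
    rw [hAx x, hSAS y]
    rw [inner_sub_left, inner_sub_right, hSinner]
    have e1 : ⟪adjoint d (d x), S y⟫ = ⟪x, adjoint d (d (S y))⟫ := by
      rw [adjoint_inner_left, adjoint_inner_right]
    congr 1
    · rw [inner_add_left, inner_add_right, inner_smul_left, inner_smul_right,
        inner_smul_left, inner_smul_right, Complex.conj_ofReal, Complex.conj_ofReal]
      have e2 : ⟪x - adjoint d (d x), S y⟫ = ⟪x, S y - adjoint d (d (S y))⟫ := by
        rw [inner_sub_left, inner_sub_right, e1]
      rw [e1, e2]
    · rw [inner_smul_left, inner_smul_right, map_mul, Complex.conj_ofReal, Complex.conj_ofReal]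
  have hdenseA : DenseRange ⇑A ↔ Function.Injective ⇑A := by
    rw [aux_dense A]
    constructor
    · intro h
      rw [injective_iff_map_eq_zero]
      intro x hx
      have h1 : ∀ z : H, ⟪A z, S x⟫ = 0 := by
        intro z
        rw [hAinner z (S x), hSS, hx, map_zero, inner_zero_right]
      have h2 := h (S x) h1
      have h3 := congrArg S h2
      rwa [hSS, map_zero] at h3
    · intro h y hy
      rw [injective_iff_map_eq_zero] at h
      have h1 : ∀ x : H, ⟪x, S (A (S y))⟫ = 0 := fun x => by rw [← hAinner x y]; exact hy x
      have h2 : S (A (S y)) = 0 := inner_self_eq_zero.mp (h1 (S (A (S y))))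
      have h3 : A (S y) = 0 := by
        have h4 := congrArg S h2
        rwa [hSS, map_zero] at h4
      have h4 := h _ h3
      have h5 := congrArg S h4
      rwa [hSS, map_zero] at h5
  have hBinner : ∀ u v : K, ⟪B u, v⟫ = ⟪u, B v⟫ := by
    intro u v
    rw [hBu u, hBu v]
    rw [inner_sub_left, inner_sub_right, inner_smul_left, inner_smul_right,
      Complex.conj_ofReal]
    congr 1
    calc ⟪d (S (adjoint d u)), v⟫ = ⟪S (adjoint d u), adjoint d v⟫ :=
          (adjoint_inner_right d _ _).symm
      _ = ⟪adjoint d u, S (adjoint d v)⟫ := hSinner _ _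
      _ = ⟪u, d (S (adjoint d v))⟫ := adjoint_inner_left d _ u
  have hdenseB : DenseRange ⇑B ↔ Function.Injective ⇑B := by
    rw [aux_dense B]
    constructor
    · intro h
      rw [injective_iff_map_eq_zero]
      intro u hu
      exact h u (fun z => by rw [hBinner z u, hu, inner_zero_right])
    · intro h y hy
      rw [injective_iff_map_eq_zero] at h
      apply h
      have h1 : ∀ u, ⟪u, B y⟫ = 0 := fun u => by rw [← hBinner u y]; exact hy u
      exact inner_self_eq_zero.mp (h1 (B y))
  -- bounded below transfer
  have hNBBA : (∀ c, 0 < c → ∃ u : K, ‖B u‖ < c * ‖u‖) →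
      (∀ c, 0 < c → ∃ x : H, ‖A x‖ < c * ‖x‖) := by
    intro hnb c hc
    set ε := min 1 (min (c/(4*|a|)) (c^2/(32*a^2))) with hεdef
    have hε0 : 0 < ε := lt_min one_pos (lt_min (by positivity) (by positivity))
    obtain ⟨u, hu⟩ := hnb ε hε0
    have hu0 : u ≠ 0 := by
      rintro rfl
      simp at hu
    have hn : 0 < ‖u‖ := norm_pos_iff.mpr hu0
    have hε1 : ε ≤ 1 := min_le_left _ _
    have hε2 : ε ≤ c/(4*|a|) := le_trans (min_le_right _ _) (min_le_left _ _)
    have hε3 : ε ≤ c^2/(32*a^2) := le_trans (min_le_right _ _) (min_le_right _ _)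
    have hvn : ‖adjoint d u‖ = ‖u‖ := hDnorm u
    have hwn : ‖S (adjoint d u)‖ = ‖u‖ := by rw [hSnorm, hvn]
    have hz1 : ‖adjoint d (d (S (adjoint d u))) - (μ:ℂ) • (adjoint d u)‖ < ε * ‖u‖ := by
      rw [← hDB u, hDnorm]
      exact hu
    have hz2 : (1 - ε) * ‖u‖ ≤ ‖adjoint d (d (S (adjoint d u)))‖ := by
      have h1 : ‖(μ:ℂ) • (adjoint d u)‖ = ‖u‖ := by rw [hμnormH, hvn]
      have h2 := norm_sub_norm_le ((μ:ℂ) • (adjoint d u)) (adjoint d (d (S (adjoint d u))))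
      rw [norm_sub_rev, h1] at h2
      linarith only [hz1, h2]
    have hp := hpyth (S (adjoint d u))
    rw [hwn] at hp
    have hz2sq : ((1-ε) * ‖u‖)^2 ≤ ‖adjoint d (d (S (adjoint d u)))‖^2 := by
      have h0 : 0 ≤ (1-ε) * ‖u‖ := mul_nonneg (by linarith) (norm_nonneg _)
      exact pow_le_pow_left₀ h0 hz2 2
    have hz3 : ‖S (adjoint d u) - adjoint d (d (S (adjoint d u)))‖^2 ≤ 2*ε*‖u‖^2 := by
      linarith only [hz2sq, hp, sq_nonneg (ε*‖u‖)]
    have hwz : ‖S (adjoint d u) - adjoint d (d (S (adjoint d u)))‖ ≤ c/(4*|a|) * ‖u‖ := by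
      have hκ2 : (c/(4*|a|))^2 = c^2/(16*a^2) := by
        rw [div_pow, mul_pow, sq_abs]
        norm_num
      have hε3' : ε ≤ (c/(4*|a|))^2/2 := by
        rw [show (c/(4*|a|))^2/2 = c^2/(32*a^2) by rw [hκ2]; ring]
        exact hε3
      have hsq : ‖S (adjoint d u) - adjoint d (d (S (adjoint d u)))‖^2
          ≤ (c/(4*|a|) * ‖u‖)^2 := by
        rw [mul_pow]
        linarith only [hz3, mul_le_mul_of_nonneg_right hε3' (sq_nonneg ‖u‖)]
      exact sqrt_step (norm_nonneg _) (by positivity) hsq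
    refine ⟨adjoint d u, ?_⟩
    have htri : ‖S (adjoint d u) - (μ:ℂ) • (adjoint d u)‖
        ≤ ‖S (adjoint d u) - adjoint d (d (S (adjoint d u)))‖
          + ‖adjoint d (d (S (adjoint d u))) - (μ:ℂ) • (adjoint d u)‖ := by
      simpa [dist_eq_norm] using dist_triangle (S (adjoint d u))
        (adjoint d (d (S (adjoint d u)))) ((μ:ℂ) • (adjoint d u))
    have hAv : ‖A (adjoint d u)‖ = |a| * ‖S (adjoint d u) - (μ:ℂ) • (adjoint d u)‖ := by
      rw [hADu u, norm_smul, Complex.norm_real, Real.norm_eq_abs]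
    rw [hAv, hvn]
    have hid : |a| * (c/(4*|a|)) = c/4 := by
      field_simp
    have hεa : |a| * ε ≤ c/4 := by
      rw [← hid]
      exact mul_le_mul_of_nonneg_left hε2 (le_of_lt haa)
    have e1 : |a| * ‖S (adjoint d u) - (μ:ℂ) • (adjoint d u)‖
        ≤ |a| * ‖S (adjoint d u) - adjoint d (d (S (adjoint d u)))‖
          + |a| * ‖adjoint d (d (S (adjoint d u))) - (μ:ℂ) • (adjoint d u)‖ := by
      calc |a| * ‖S (adjoint d u) - (μ:ℂ) • (adjoint d u)‖
          ≤ |a| * (‖S (adjoint d u) - adjoint d (d (S (adjoint d u)))‖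
            + ‖adjoint d (d (S (adjoint d u))) - (μ:ℂ) • (adjoint d u)‖) :=
            mul_le_mul_of_nonneg_left htri (abs_nonneg a)
        _ = |a| * ‖S (adjoint d u) - adjoint d (d (S (adjoint d u)))‖
            + |a| * ‖adjoint d (d (S (adjoint d u))) - (μ:ℂ) • (adjoint d u)‖ := mul_add _ _ _
    have e2 : |a| * ‖S (adjoint d u) - adjoint d (d (S (adjoint d u)))‖ ≤ (c/4) * ‖u‖ := by
      calc |a| * ‖S (adjoint d u) - adjoint d (d (S (adjoint d u)))‖
          ≤ |a| * (c/(4*|a|) * ‖u‖) := mul_le_mul_of_nonneg_left hwz (abs_nonneg a)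
        _ = (|a| * (c/(4*|a|))) * ‖u‖ := by ring
        _ = (c/4) * ‖u‖ := by rw [hid]
    have e3 : |a| * ‖adjoint d (d (S (adjoint d u))) - (μ:ℂ) • (adjoint d u)‖
        < (c/4) * ‖u‖ := by
      calc |a| * ‖adjoint d (d (S (adjoint d u))) - (μ:ℂ) • (adjoint d u)‖
          < |a| * (ε * ‖u‖) := mul_lt_mul_of_pos_left hz1 haa
        _ = (|a| * ε) * ‖u‖ := by ring
        _ ≤ (c/4) * ‖u‖ := mul_le_mul_of_nonneg_right hεa (norm_nonneg u)
    have e4 : (c/4) * ‖u‖ + (c/4) * ‖u‖ < c * ‖u‖ := by linarith only [mul_pos hc hn]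
    linarith only [e1, e2, e3, e4]
  have hNBAB : (∀ c, 0 < c → ∃ x : H, ‖A x‖ < c * ‖x‖) →
      (∀ c, 0 < c → ∃ u : K, ‖B u‖ < c * ‖u‖) := by
    intro hnb c hc
    have hE : 0 < |a| + |b| := add_pos_of_pos_of_nonneg haa (abs_nonneg b)
    have hm : 0 < |a^2 - b^2| := abs_pos.mpr (sub_ne_zero.mpr hab)
    set κ := c*|a|/(4*(|a|+|b|)) with hκdef
    have hκ0 : 0 < κ := div_pos (mul_pos hc haa) (by linarith)
    set δ := min 1 (min (|a^2-b^2|/(2*(2*|a|+3)))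
        (min (c*|a|/4) (κ^2 * |a^2-b^2|/(2*|a|+3)))) with hδdef
    have hG : (0:ℝ) < 2*|a|+3 := by positivity
    have hδ0 : 0 < δ := lt_min one_pos (lt_min (by positivity)
      (lt_min (by positivity) (by positivity)))
    have hδ1 : δ ≤ 1 := min_le_left _ _
    have hδ2 : δ ≤ |a^2-b^2|/(2*(2*|a|+3)) := le_trans (min_le_right _ _) (min_le_left _ _)
    have hδ3 : δ ≤ c*|a|/4 :=
      le_trans (min_le_right _ _) (le_trans (min_le_right _ _) (min_le_left _ _))
    have hδ4 : δ ≤ κ^2 * |a^2-b^2|/(2*|a|+3) :=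
      le_trans (min_le_right _ _) (le_trans (min_le_right _ _) (min_le_right _ _))
    obtain ⟨x, hx⟩ := hnb δ hδ0
    have hx0 : x ≠ 0 := by
      rintro rfl
      simp at hx
    have hn : 0 < ‖x‖ := norm_pos_iff.mpr hx0
    have hpq := hpyth x
    have hr : ‖(a:ℂ) • (adjoint d (d x)) + (b:ℂ) • (x - adjoint d (d x))
        - ((μ:ℂ)*a) • S x‖ < δ * ‖x‖ := by
      have hre : (a:ℂ) • (adjoint d (d x)) + (b:ℂ) • (x - adjoint d (d x))
          - ((μ:ℂ)*a) • S x = S (A x) := by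
        rw [hAx x, map_sub, hSS, map_smul]
      rw [hre, hSnorm]
      exact hx
    have hμa : ‖((μ:ℂ)*a) • S x‖ = |a| * ‖x‖ := by
      rw [norm_smul, norm_mul, hμ1, Complex.norm_real, Real.norm_eq_abs, one_mul, hSnorm]
    have hub : ‖(a:ℂ) • (adjoint d (d x)) + (b:ℂ) • (x - adjoint d (d x))‖
        ≤ |a| * ‖x‖ + δ * ‖x‖ := by
      have h2 := norm_sub_norm_le ((a:ℂ) • (adjoint d (d x)) + (b:ℂ) • (x - adjoint d (d x)))
        (((μ:ℂ)*a) • S x)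
      rw [hμa] at h2
      linarith only [hr, h2]
    have hlb : |a| * ‖x‖ - δ * ‖x‖
        ≤ ‖(a:ℂ) • (adjoint d (d x)) + (b:ℂ) • (x - adjoint d (d x))‖ := by
      have h2 := norm_sub_norm_le (((μ:ℂ)*a) • S x)
        ((a:ℂ) • (adjoint d (d x)) + (b:ℂ) • (x - adjoint d (d x)))
      rw [norm_sub_rev, hμa] at h2
      linarith only [hr, h2]
    have hq2 : |a^2-b^2| * ‖x - adjoint d (d x)‖^2 ≤ (2*|a|+3)*δ * ‖x‖^2 := by
      have hC' : ‖(a:ℂ) • (adjoint d (d x)) + (b:ℂ) • (x - adjoint d (d x))‖^2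
          = |a|^2 * ‖adjoint d (d x)‖^2 + |b|^2 * ‖x - adjoint d (d x)‖^2 := by
        rw [sq_abs a, sq_abs b]
        exact hCnorm x
      have h10 := key2 (abs_nonneg a) hδ0 hδ1 hn
        (norm_nonneg ((a:ℂ) • (adjoint d (d x)) + (b:ℂ) • (x - adjoint d (d x))))
        hpq hC' hub hlb
      rcases abs_cases (a^2 - b^2) with ⟨he, hsgn⟩ | ⟨he, hsgn⟩
      · rw [he, show a^2 - b^2 = |a|^2 - |b|^2 by rw [sq_abs, sq_abs]]
        exact h10.1
      · rw [he, show -(a^2 - b^2) = |b|^2 - |a|^2 by rw [sq_abs, sq_abs]; ring]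
        exact h10.2
    have hqκ : ‖x - adjoint d (d x)‖ ≤ κ * ‖x‖ := by
      have h2 : (2*|a|+3)*δ ≤ κ^2 * |a^2-b^2| := by
        have h3 := (le_div_iff₀ hG).mp hδ4
        linarith
      have h5 := mul_le_mul_of_nonneg_right h2 (sq_nonneg ‖x‖)
      have h4 : |a^2-b^2| * ‖x - adjoint d (d x)‖^2 ≤ |a^2-b^2| * (κ*‖x‖)^2 := by
        have h6 : κ^2 * |a^2-b^2| * ‖x‖^2 = |a^2-b^2| * (κ*‖x‖)^2 := by ring
        linarith only [hq2, h5, h6.le, h6.ge]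
      have h1 : ‖x - adjoint d (d x)‖^2 ≤ (κ*‖x‖)^2 := (mul_le_mul_iff_right₀ hm).mp h4
      exact sqrt_step (norm_nonneg _) (by positivity) h1
    have hq12 : ‖x - adjoint d (d x)‖^2 ≤ (1/2) * ‖x‖^2 := by
      have h2 : (2*|a|+3)*δ ≤ |a^2-b^2|/2 := by
        have h3 := (le_div_iff₀ (show (0:ℝ) < 2*(2*|a|+3) by positivity)).mp hδ2
        linarith
      have h5 := mul_le_mul_of_nonneg_right h2 (sq_nonneg ‖x‖)
      have h4 : |a^2-b^2| * ‖x - adjoint d (d x)‖^2 ≤ |a^2-b^2| * ((1/2) * ‖x‖^2) := by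
        linarith only [hq2, h5]
      exact (mul_le_mul_iff_right₀ hm).mp h4
    have hSx2 : S x = S (adjoint d (d x)) + S (x - adjoint d (d x)) := by
      rw [← map_add]
      congr 1
      abel
    have hkey : (a:ℂ) • (adjoint d (d x)) - ((μ:ℂ)*a) • S (adjoint d (d x))
        = ((a:ℂ) • (adjoint d (d x)) + (b:ℂ) • (x - adjoint d (d x)) - ((μ:ℂ)*a) • S x)
          + ((μ:ℂ)*a) • S (x - adjoint d (d x)) - (b:ℂ) • (x - adjoint d (d x)) := by
      rw [hSx2, smul_add]
      abel
    have hnorm_aμS : ‖((μ:ℂ)*a) • S (x - adjoint d (d x))‖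
        = |a| * ‖x - adjoint d (d x)‖ := by
      rw [norm_smul, norm_mul, hμ1, Complex.norm_real, Real.norm_eq_abs, one_mul, hSnorm]
    have hnorm_b : ‖(b:ℂ) • (x - adjoint d (d x))‖ = |b| * ‖x - adjoint d (d x)‖ := by
      rw [norm_smul, Complex.norm_real, Real.norm_eq_abs]
    have hmain : |a| * ‖adjoint d (d x) - (μ:ℂ) • S (adjoint d (d x))‖
        ≤ δ * ‖x‖ + (|a|+|b|) * ‖x - adjoint d (d x)‖ := by
      have h1 : (a:ℂ) • (adjoint d (d x)) - ((μ:ℂ)*a) • S (adjoint d (d x))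
          = (a:ℂ) • (adjoint d (d x) - (μ:ℂ) • S (adjoint d (d x))) := by
        rw [smul_sub, smul_smul, mul_comm ((μ:ℝ):ℂ) ((a:ℝ):ℂ)]
      have h2 : ‖(a:ℂ) • (adjoint d (d x) - (μ:ℂ) • S (adjoint d (d x)))‖
          = |a| * ‖adjoint d (d x) - (μ:ℂ) • S (adjoint d (d x))‖ := by
        rw [norm_smul, Complex.norm_real, Real.norm_eq_abs]
      rw [← h2, ← h1, hkey]
      refine le_trans (norm_sub_le _ _) ?_
      refine le_trans (add_le_add_left (norm_add_le _ _) _) ?_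
      rw [hnorm_aμS, hnorm_b]
      have h3 := le_of_lt hr
      linarith only [h3]
    have hpn : ‖x‖/2 < ‖adjoint d (d x)‖ := by
      have hP4 : (0:ℝ) ≤ ‖x‖/2 + ‖adjoint d (d x)‖ := by positivity
      nlinarith only [hq12, hpq, hP4, hn, mul_pos hn hn, norm_nonneg (adjoint d (d x))]
    have hfinal2 : ‖adjoint d (d x) - (μ:ℂ) • S (adjoint d (d x))‖ ≤ (c/2) * ‖x‖ := by
      have hEκ : (|a|+|b|) * κ = c*|a|/4 := by
        rw [hκdef]
        field_simp
      have h5 : (|a|+|b|) * ‖x - adjoint d (d x)‖ ≤ (|a|+|b|) * (κ*‖x‖) :=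
        mul_le_mul_of_nonneg_left hqκ (by positivity)
      have h4 : |a| * ‖adjoint d (d x) - (μ:ℂ) • S (adjoint d (d x))‖
          ≤ |a| * ((c/2)*‖x‖) := by
        nlinarith [hmain, h5, hδ3, hn, hEκ, haa, mul_le_mul_of_nonneg_right hδ3 hn.le]
      exact le_of_mul_le_mul_left (by linarith [h4]) haa
    refine ⟨d x, ?_⟩
    have hdp : d (adjoint d (d x)) = d x := hdD (d x)
    have hBdx2 : B (d x) = d (S (adjoint d (d x)) - (μ:ℂ) • (adjoint d (d x))) := by
      calc B (d x) = B (d (adjoint d (d x))) := by rw [hdp]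
        _ = d (S (adjoint d (d x)) - (μ:ℂ) • (adjoint d (d x))) := hBdp _ (hP x)
    have hnormflip : ‖S (adjoint d (d x)) - (μ:ℂ) • (adjoint d (d x))‖
        = ‖adjoint d (d x) - (μ:ℂ) • S (adjoint d (d x))‖ := by
      have h6 : S (adjoint d (d x) - (μ:ℂ) • S (adjoint d (d x)))
          = S (adjoint d (d x)) - (μ:ℂ) • (adjoint d (d x)) := by
        rw [map_sub, map_smul, hSS]
      rw [← h6, hSnorm]
    have hBn : ‖B (d x)‖ ≤ (c/2) * ‖x‖ := by
      rw [hBdx2]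
      refine le_trans (hd_contract _) ?_
      rw [hnormflip]
      exact hfinal2
    rw [hdx_norm x]
    have h8 := mul_lt_mul_of_pos_left hpn hc
    linarith only [hBn, h8]
  -- surjectivity equivalence (given injectivity)
  have hsurjEq : Function.Injective ⇑A → Function.Injective ⇑B →
      (Function.Surjective ⇑A ↔ Function.Surjective ⇑B) := by
    intro hiA hiB
    rw [aux_surj_iff A hiA (hdenseA.mpr hiA), aux_surj_iff B hiB (hdenseB.mpr hiB)]
    constructor
    · intro hbd
      by_contra hnb
      push_neg at hnb
      obtain ⟨c, hc, hbound⟩ := hbd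
      obtain ⟨x, hx⟩ := (hNBBA hnb) c hc
      exact absurd (hbound x) (not_le.mpr hx)
    · intro hbd
      by_contra hnb
      push_neg at hnb
      obtain ⟨c, hc, hbound⟩ := hbd
      obtain ⟨u, hu⟩ := (hNBAB hnb) c hc
      exact absurd (hbound u) (not_le.mpr hu)
  constructor
  · rintro ⟨hi, hde, hns⟩
    have hiB := hinjBofA hi
    exact ⟨hiB, hdenseB.mpr hiB, fun hsB => hns ((hsurjEq hi hiB).mpr hsB)⟩
  · rintro ⟨hi, hde, hns⟩
    have hiA := hinjAofB hi
    exact ⟨hiA, hdenseA.mpr hiA, fun hsA => hns ((hsurjEq hiA hi).mp hsA)⟩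

/-- Under the standing assumptions, `a ∈ σ_c(U) ↔ 1 ∈ σ_c(T)` and
`−a ∈ σ_c(U) ↔ −1 ∈ σ_c(T)`. -/
theorem stmt_17 {H K : Type*}
    [NormedAddCommGroup H] [InnerProductSpace ℂ H] [CompleteSpace H] [Nontrivial H]
    [NormedAddCommGroup K] [InnerProductSpace ℂ K] [CompleteSpace K] [Nontrivial K]
    (a b : ℝ)
    (d : H →L[ℂ] K) (hd : d ∘L (adjoint d) = 1)
    (S : H →L[ℂ] H) (hS : IsSelfAdjoint S) (hS2 : S ∘L S = 1)
    (C : H →L[ℂ] H)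
    (hC : C = (a : ℂ) • ((adjoint d) ∘L d) + (b : ℂ) • (1 - (adjoint d) ∘L d))
    (U : H →L[ℂ] H) (hU : U = S ∘L C)
    (T : K →L[ℂ] K) (hT : T = d ∘L S ∘L (adjoint d))
    (h1 : (adjoint d) ∘L d ≠ 1) (h2 : S ≠ 1) (h3 : S ≠ -1)
    (h4 : a ≠ b) (h5 : a ≠ -b) (h6 : a * b ≠ 0) :
    (ContSpec U (a : ℂ) ↔ ContSpec T 1) ∧
    (ContSpec U (-(a : ℂ)) ↔ ContSpec T (-1)) := by
  have ha : a ≠ 0 := left_ne_zero_of_mul h6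
  have hab : a^2 ≠ b^2 := by
    intro h
    have h2' : (a - b) * (a + b) = 0 := by linear_combination h
    rcases mul_eq_zero.mp h2' with h' | h'
    · exact h4 (by linarith)
    · exact h5 (by linarith)
  subst hC
  subst hU
  subst hT
  constructor
  · have h := key_thm a b 1 (by norm_num) ha hab d hd S hS hS2
    simpa using h
  · have h := key_thm a b (-1) (by norm_num) ha hab d hd S hS hS2
    simpa using h

end
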